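/- Let n ≥ 3, ℓ ≥ 1, and let Γ : ({0,1}^ℓ)^n → ℂ be a blockwise symmetric signature of arity nℓ satisfying the Matchgate Identities. Then for all α_1, α_2, …, α_n ∈ {0,1}^ℓ, all i, j ∈ {1,…,ℓ} with i < j, and all s, t ∈ {1,…,ℓ}, the two vectors (Γ(α_1,α_2,α_3,…,α_n), Γ(α_1+e_i+e_j,α_2,α_3,…,α_n)) and (Γ(α_1,α_2+e_s,α_3+e_t,α_4,…,α_n), Γ(α_1+e_i+e_j,α_2+e_s,α_3+e_t,α_4,…,α_n)) in ℂ² are linearly dependent. -/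

import Mathlib

open Finset

namespace Matchgate

/-- Bitwise XOR of two bit strings. -/
def bxor {m : ℕ} (a b : Fin m → Bool) : Fin m → Bool := fun i => Bool.xor (a i) (b i)

/-- The bit string `e_p` with a `1` in position `p` and `0` elsewhere. -/
def unit {m : ℕ} (p : Fin m) : Fin m → Bool := fun i => decide (i = p)

/-- Hamming weight of a bit string. -/
def wt {m : ℕ} (a : Fin m → Bool) : ℕ := (Finset.univ.filter fun i => a i = true).card

/-- Total Hamming weight of a blockwise bit string. -/
def wtB {n ℓ : ℕ} (α : Fin n → Fin ℓ → Bool) : ℕ := ∑ j, wt (α j)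

/-- Blockwise XOR. -/
def bxorB {n ℓ : ℕ} (α β : Fin n → Fin ℓ → Bool) : Fin n → Fin ℓ → Bool :=
  fun j => bxor (α j) (β j)

/-- The parity bit `p(a) = wt(a) mod 2` of a bit string, as a `Bool`. -/
def pB {m : ℕ} (a : Fin m → Bool) : Bool := decide (wt a % 2 = 1)

/-- A blockwise signature (blocks of size `ℓ`, `n` blocks) is blockwise symmetric if it is
invariant under every permutation of its blocks. -/
def BlockSym {n ℓ : ℕ} (Γ : (Fin n → Fin ℓ → Bool) → ℂ) : Prop :=
  ∀ (σ : Equiv.Perm (Fin n)) (α : Fin n → Fin ℓ → Bool), Γ (α ∘ σ) = Γ α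

/-- The parity condition for a blockwise signature: either all even entries vanish or all
odd entries vanish. -/
def ParityCond {n ℓ : ℕ} (Γ : (Fin n → Fin ℓ → Bool) → ℂ) : Prop :=
  (∀ α, wtB α % 2 = 0 → Γ α = 0) ∨ (∀ α, wtB α % 2 = 1 → Γ α = 0)

/-- The Matchgate Identities for a blockwise signature.  Positions are pairs `(j, i)`
(block `j`, bit `i` within the block) ordered lexicographically block-major, which is the
order of the flattened bit string `α₁α₂⋯αₙ`.  For every pattern `α` and every position set
`P`, the alternating sum `Σ_{p ∈ P} (-1)^{rank of p in P} Γ(α + e_p) Γ(α + P + e_p)`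
vanishes. -/
def MGI {n ℓ : ℕ} (Γ : (Fin n → Fin ℓ → Bool) → ℂ) : Prop :=
  ∀ (α : Fin n → Fin ℓ → Bool) (P : Finset (Fin n × Fin ℓ)),
    ∑ p ∈ P,
      (-1 : ℂ) ^ (P.filter fun q => q.1 < p.1 ∨ (q.1 = p.1 ∧ q.2 ≤ p.2)).card *
        Γ (fun j i => Bool.xor (α j i) (decide ((j, i) = p))) *
        Γ (fun j i => Bool.xor (α j i)
            (Bool.xor (decide ((j, i) ∈ P)) (decide ((j, i) = p)))) = 0

/-- Prepend an element to a length `n - 1` tuple, giving a length `n` tuple. -/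
def cons0 {n : ℕ} {X : Type*} (a : X) (b : Fin (n - 1) → X) : Fin n → X :=
  fun j => if h : (j : ℕ) = 0 then a else b ⟨(j : ℕ) - 1, by have := j.isLt; omega⟩

/-- The matrix form `M(Γ)` of a blockwise signature: rows indexed by the first block,
columns by the remaining `n - 1` blocks. -/
def matrixForm {n ℓ : ℕ} (Γ : (Fin n → Fin ℓ → Bool) → ℂ) :
    Matrix (Fin ℓ → Bool) (Fin (n - 1) → Fin ℓ → Bool) ℂ :=
  Matrix.of fun a b => Γ (cons0 a b)

/-- XOR block `j` of `α` with `c`, leaving the other blocks unchanged. -/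
def flipBlock {n ℓ : ℕ} (α : Fin n → Fin ℓ → Bool) (j : Fin n) (c : Fin ℓ → Bool) :
    Fin n → Fin ℓ → Bool := Function.update α j (bxor (α j) c)

/-- Insert block `c` at position `t` into a tuple of `n - 1` blocks. -/
def insertAt {n ℓ : ℕ} (t : Fin n) (c : Fin ℓ → Bool) (β : Fin (n - 1) → Fin ℓ → Bool) :
    Fin n → Fin ℓ → Bool :=
  fun j =>
    if h1 : (j : ℕ) = (t : ℕ) then c
    else if h2 : (j : ℕ) < (t : ℕ) then
      β ⟨(j : ℕ), by have := t.isLt; have := j.isLt; omega⟩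
    else β ⟨(j : ℕ) - 1, by have := t.isLt; have := j.isLt; omega⟩

/-- The parity condition for a flat (Boolean-bit) signature. -/
def ParityCond1 {m : ℕ} (Γ : (Fin m → Bool) → ℂ) : Prop :=
  (∀ α, wt α % 2 = 0 → Γ α = 0) ∨ (∀ α, wt α % 2 = 1 → Γ α = 0)

/-- The Matchgate Identities for a flat (Boolean-bit) signature. -/
def MGI1 {m : ℕ} (Γ : (Fin m → Bool) → ℂ) : Prop :=
  ∀ (α : Fin m → Bool) (P : Finset (Fin m)),
    ∑ p ∈ P,
      (-1 : ℂ) ^ (P.filter fun q => q ≤ p).card *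
        Γ (fun k => Bool.xor (α k) (decide (k = p))) *
        Γ (fun k => Bool.xor (α k) (Bool.xor (decide (k ∈ P)) (decide (k = p)))) = 0

section Aux
variable {n ℓ : ℕ}


lemma flipBlock_apply (α : Fin n → Fin ℓ → Bool) (k : Fin n) (c : Fin ℓ → Bool)
    (k' : Fin n) (m : Fin ℓ) :
    flipBlock α k c k' m = Bool.xor (α k' m) (decide (k' = k) && c m) := by
  by_cases h : k' = k <;> simp [flipBlock, Function.update_apply, h, bxor]

lemma flipBlock_comm (α : Fin n → Fin ℓ → Bool) {k k' : Fin n} (h : k ≠ k')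
    (c c' : Fin ℓ → Bool) :
    flipBlock (flipBlock α k c) k' c' = flipBlock (flipBlock α k' c') k c := by
  funext a b
  simp [flipBlock_apply]
  by_cases h1 : a = k <;> by_cases h2 : a = k' <;> simp_all

lemma flipBlock_flipBlock (α : Fin n → Fin ℓ → Bool) (k : Fin n) (c c' : Fin ℓ → Bool) :
    flipBlock (flipBlock α k c) k c' = flipBlock α k (bxor c c') := by
  funext a b
  simp [flipBlock_apply, bxor]
  by_cases h1 : a = k <;> simp_all [Bool.xor_assoc]

lemma flipBlock_comp (β : Fin n → Fin ℓ → Bool) (σ : Equiv.Perm (Fin n))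
    (k : Fin n) (c : Fin ℓ → Bool) :
    flipBlock (β ∘ σ) k c = (flipBlock β (σ k) c) ∘ σ := by
  funext a b
  simp [flipBlock_apply]

lemma key (hn : 3 ≤ n) (Γ : (Fin n → Fin ℓ → Bool) → ℂ) (hmgi : MGI Γ)
    (α : Fin n → Fin ℓ → Bool) (i j s t : Fin ℓ) (hij : i < j) :
    Γ α * Γ (flipBlock (flipBlock (flipBlock α ⟨0, by omega⟩ (bxor (unit i) (unit j)))
          ⟨1, by omega⟩ (unit s)) ⟨2, by omega⟩ (unit t))
      - Γ (flipBlock α ⟨0, by omega⟩ (bxor (unit i) (unit j))) *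
          Γ (flipBlock (flipBlock α ⟨1, by omega⟩ (unit s)) ⟨2, by omega⟩ (unit t))
      + Γ (flipBlock (flipBlock α ⟨1, by omega⟩ (unit s)) ⟨0, by omega⟩ (unit i)) *
          Γ (flipBlock (flipBlock α ⟨2, by omega⟩ (unit t)) ⟨0, by omega⟩ (unit j))
      - Γ (flipBlock (flipBlock α ⟨2, by omega⟩ (unit t)) ⟨0, by omega⟩ (unit i)) *
          Γ (flipBlock (flipBlock α ⟨1, by omega⟩ (unit s)) ⟨0, by omega⟩ (unit j)) = 0 := by
  set b0 : Fin n := ⟨0, by omega⟩ with hb0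
  set b1 : Fin n := ⟨1, by omega⟩ with hb1
  set b2 : Fin n := ⟨2, by omega⟩ with hb2
  have hij' : i ≠ j := ne_of_lt hij
  have hji : ¬ j ≤ i := not_le.mpr hij
  have h01 : b0 ≠ b1 := by simp [hb0, hb1, Fin.ext_iff]
  have h02 : b0 ≠ b2 := by simp [hb0, hb2, Fin.ext_iff]
  have h12 : b1 ≠ b2 := by simp [hb1, hb2, Fin.ext_iff]
  have l01 : b0 < b1 := by simp [hb0, hb1, Fin.lt_def]
  have l02 : b0 < b2 := by simp [hb0, hb2, Fin.lt_def]
  have l12 : b1 < b2 := by simp [hb1, hb2, Fin.lt_def]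
  have nl10 : ¬ b1 < b0 := by simp [hb0, hb1, Fin.lt_def]
  have nl20 : ¬ b2 < b0 := by simp [hb0, hb2, Fin.lt_def]
  have nl21 : ¬ b2 < b1 := by simp [hb1, hb2, Fin.lt_def]
  have h10 : b1 ≠ b0 := h01.symm
  have h20 : b2 ≠ b0 := h02.symm
  have h21 : b2 ≠ b1 := h12.symm
  have ha1 : (fun k m => flipBlock α b0 (unit i) k m ^^ decide ((k, m) = (b0, i)))
      = α := by
    funext k m
    rcases eq_or_ne k b0 with hk | hk0
    · subst hk
      by_cases hmi : m = i <;> by_cases hmj : m = j <;>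
        simp [flipBlock_apply, unit, bxor, Prod.ext_iff, Finset.mem_insert, Finset.mem_singleton, hij', hij'.symm, h01, h02, h12, h10, h20, h21, hmi, hmj]
    · rcases eq_or_ne k b1 with hk | hk1
      · subst hk
        by_cases hms : m = s <;>
          simp [flipBlock_apply, unit, bxor, Prod.ext_iff, Finset.mem_insert, Finset.mem_singleton, hij', hij'.symm, h01, h02, h12, h10, h20, h21, hms]
      · rcases eq_or_ne k b2 with hk | hk2
        · subst hk
          by_cases hmt : m = t <;>
            simp [flipBlock_apply, unit, bxor, Prod.ext_iff, Finset.mem_insert, Finset.mem_singleton, hij', hij'.symm, h01, h02, h12, h10, h20, h21, hmt]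
        · simp [flipBlock_apply, unit, bxor, Prod.ext_iff, Finset.mem_insert, Finset.mem_singleton, hij', hij'.symm, h01, h02, h12, h10, h20, h21, hk0, hk1, hk2]

  have ha3 : (fun k m => flipBlock α b0 (unit i) k m ^^ decide ((k, m) = (b0, j)))
      = flipBlock α b0 (bxor (unit i) (unit j)) := by
    funext k m
    rcases eq_or_ne k b0 with hk | hk0
    · subst hk
      by_cases hmi : m = i <;> by_cases hmj : m = j <;>
        simp [flipBlock_apply, unit, bxor, Prod.ext_iff, Finset.mem_insert, Finset.mem_singleton, hij', hij'.symm, h01, h02, h12, h10, h20, h21, hmi, hmj]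
    · rcases eq_or_ne k b1 with hk | hk1
      · subst hk
        by_cases hms : m = s <;>
          simp [flipBlock_apply, unit, bxor, Prod.ext_iff, Finset.mem_insert, Finset.mem_singleton, hij', hij'.symm, h01, h02, h12, h10, h20, h21, hms]
      · rcases eq_or_ne k b2 with hk | hk2
        · subst hk
          by_cases hmt : m = t <;>
            simp [flipBlock_apply, unit, bxor, Prod.ext_iff, Finset.mem_insert, Finset.mem_singleton, hij', hij'.symm, h01, h02, h12, h10, h20, h21, hmt]
        · simp [flipBlock_apply, unit, bxor, Prod.ext_iff, Finset.mem_insert, Finset.mem_singleton, hij', hij'.symm, h01, h02, h12, h10, h20, h21, hk0, hk1, hk2]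

  have ha5 : (fun k m => flipBlock α b0 (unit i) k m ^^ decide ((k, m) = (b1, s)))
      = flipBlock (flipBlock α b1 (unit s)) b0 (unit i) := by
    funext k m
    rcases eq_or_ne k b0 with hk | hk0
    · subst hk
      by_cases hmi : m = i <;> by_cases hmj : m = j <;>
        simp [flipBlock_apply, unit, bxor, Prod.ext_iff, Finset.mem_insert, Finset.mem_singleton, hij', hij'.symm, h01, h02, h12, h10, h20, h21, hmi, hmj]
    · rcases eq_or_ne k b1 with hk | hk1
      · subst hk
        by_cases hms : m = s <;>
          simp [flipBlock_apply, unit, bxor, Prod.ext_iff, Finset.mem_insert, Finset.mem_singleton, hij', hij'.symm, h01, h02, h12, h10, h20, h21, hms]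
      · rcases eq_or_ne k b2 with hk | hk2
        · subst hk
          by_cases hmt : m = t <;>
            simp [flipBlock_apply, unit, bxor, Prod.ext_iff, Finset.mem_insert, Finset.mem_singleton, hij', hij'.symm, h01, h02, h12, h10, h20, h21, hmt]
        · simp [flipBlock_apply, unit, bxor, Prod.ext_iff, Finset.mem_insert, Finset.mem_singleton, hij', hij'.symm, h01, h02, h12, h10, h20, h21, hk0, hk1, hk2]

  have ha7 : (fun k m => flipBlock α b0 (unit i) k m ^^ decide ((k, m) = (b2, t)))
      = flipBlock (flipBlock α b2 (unit t)) b0 (unit i) := by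
    funext k m
    rcases eq_or_ne k b0 with hk | hk0
    · subst hk
      by_cases hmi : m = i <;> by_cases hmj : m = j <;>
        simp [flipBlock_apply, unit, bxor, Prod.ext_iff, Finset.mem_insert, Finset.mem_singleton, hij', hij'.symm, h01, h02, h12, h10, h20, h21, hmi, hmj]
    · rcases eq_or_ne k b1 with hk | hk1
      · subst hk
        by_cases hms : m = s <;>
          simp [flipBlock_apply, unit, bxor, Prod.ext_iff, Finset.mem_insert, Finset.mem_singleton, hij', hij'.symm, h01, h02, h12, h10, h20, h21, hms]
      · rcases eq_or_ne k b2 with hk | hk2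
        · subst hk
          by_cases hmt : m = t <;>
            simp [flipBlock_apply, unit, bxor, Prod.ext_iff, Finset.mem_insert, Finset.mem_singleton, hij', hij'.symm, h01, h02, h12, h10, h20, h21, hmt]
        · simp [flipBlock_apply, unit, bxor, Prod.ext_iff, Finset.mem_insert, Finset.mem_singleton, hij', hij'.symm, h01, h02, h12, h10, h20, h21, hk0, hk1, hk2]

  have ha2 : (fun k m => flipBlock α b0 (unit i) k m ^^
        (decide ((k, m) ∈ ({(b0,i),(b0,j),(b1,s),(b2,t)} : Finset (Fin n × Fin ℓ))) ^^ decide ((k, m) = (b0, i))))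
      = flipBlock (flipBlock (flipBlock α b0 (bxor (unit i) (unit j))) b1 (unit s)) b2 (unit t) := by
    funext k m
    rcases eq_or_ne k b0 with hk | hk0
    · subst hk
      by_cases hmi : m = i <;> by_cases hmj : m = j <;>
        simp [flipBlock_apply, unit, bxor, Prod.ext_iff, Finset.mem_insert, Finset.mem_singleton, hij', hij'.symm, h01, h02, h12, h10, h20, h21, hmi, hmj]
    · rcases eq_or_ne k b1 with hk | hk1
      · subst hk
        by_cases hms : m = s <;>
          simp [flipBlock_apply, unit, bxor, Prod.ext_iff, Finset.mem_insert, Finset.mem_singleton, hij', hij'.symm, h01, h02, h12, h10, h20, h21, hms]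
      · rcases eq_or_ne k b2 with hk | hk2
        · subst hk
          by_cases hmt : m = t <;>
            simp [flipBlock_apply, unit, bxor, Prod.ext_iff, Finset.mem_insert, Finset.mem_singleton, hij', hij'.symm, h01, h02, h12, h10, h20, h21, hmt]
        · simp [flipBlock_apply, unit, bxor, Prod.ext_iff, Finset.mem_insert, Finset.mem_singleton, hij', hij'.symm, h01, h02, h12, h10, h20, h21, hk0, hk1, hk2]

  have ha4 : (fun k m => flipBlock α b0 (unit i) k m ^^
        (decide ((k, m) ∈ ({(b0,i),(b0,j),(b1,s),(b2,t)} : Finset (Fin n × Fin ℓ))) ^^ decide ((k, m) = (b0, j))))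
      = flipBlock (flipBlock α b1 (unit s)) b2 (unit t) := by
    funext k m
    rcases eq_or_ne k b0 with hk | hk0
    · subst hk
      by_cases hmi : m = i <;> by_cases hmj : m = j <;>
        simp [flipBlock_apply, unit, bxor, Prod.ext_iff, Finset.mem_insert, Finset.mem_singleton, hij', hij'.symm, h01, h02, h12, h10, h20, h21, hmi, hmj]
    · rcases eq_or_ne k b1 with hk | hk1
      · subst hk
        by_cases hms : m = s <;>
          simp [flipBlock_apply, unit, bxor, Prod.ext_iff, Finset.mem_insert, Finset.mem_singleton, hij', hij'.symm, h01, h02, h12, h10, h20, h21, hms]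
      · rcases eq_or_ne k b2 with hk | hk2
        · subst hk
          by_cases hmt : m = t <;>
            simp [flipBlock_apply, unit, bxor, Prod.ext_iff, Finset.mem_insert, Finset.mem_singleton, hij', hij'.symm, h01, h02, h12, h10, h20, h21, hmt]
        · simp [flipBlock_apply, unit, bxor, Prod.ext_iff, Finset.mem_insert, Finset.mem_singleton, hij', hij'.symm, h01, h02, h12, h10, h20, h21, hk0, hk1, hk2]

  have ha6 : (fun k m => flipBlock α b0 (unit i) k m ^^
        (decide ((k, m) ∈ ({(b0,i),(b0,j),(b1,s),(b2,t)} : Finset (Fin n × Fin ℓ))) ^^ decide ((k, m) = (b1, s))))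
      = flipBlock (flipBlock α b2 (unit t)) b0 (unit j) := by
    funext k m
    rcases eq_or_ne k b0 with hk | hk0
    · subst hk
      by_cases hmi : m = i <;> by_cases hmj : m = j <;>
        simp [flipBlock_apply, unit, bxor, Prod.ext_iff, Finset.mem_insert, Finset.mem_singleton, hij', hij'.symm, h01, h02, h12, h10, h20, h21, hmi, hmj]
    · rcases eq_or_ne k b1 with hk | hk1
      · subst hk
        by_cases hms : m = s <;>
          simp [flipBlock_apply, unit, bxor, Prod.ext_iff, Finset.mem_insert, Finset.mem_singleton, hij', hij'.symm, h01, h02, h12, h10, h20, h21, hms]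
      · rcases eq_or_ne k b2 with hk | hk2
        · subst hk
          by_cases hmt : m = t <;>
            simp [flipBlock_apply, unit, bxor, Prod.ext_iff, Finset.mem_insert, Finset.mem_singleton, hij', hij'.symm, h01, h02, h12, h10, h20, h21, hmt]
        · simp [flipBlock_apply, unit, bxor, Prod.ext_iff, Finset.mem_insert, Finset.mem_singleton, hij', hij'.symm, h01, h02, h12, h10, h20, h21, hk0, hk1, hk2]

  have ha8 : (fun k m => flipBlock α b0 (unit i) k m ^^
        (decide ((k, m) ∈ ({(b0,i),(b0,j),(b1,s),(b2,t)} : Finset (Fin n × Fin ℓ))) ^^ decide ((k, m) = (b2, t))))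
      = flipBlock (flipBlock α b1 (unit s)) b0 (unit j) := by
    funext k m
    rcases eq_or_ne k b0 with hk | hk0
    · subst hk
      by_cases hmi : m = i <;> by_cases hmj : m = j <;>
        simp [flipBlock_apply, unit, bxor, Prod.ext_iff, Finset.mem_insert, Finset.mem_singleton, hij', hij'.symm, h01, h02, h12, h10, h20, h21, hmi, hmj]
    · rcases eq_or_ne k b1 with hk | hk1
      · subst hk
        by_cases hms : m = s <;>
          simp [flipBlock_apply, unit, bxor, Prod.ext_iff, Finset.mem_insert, Finset.mem_singleton, hij', hij'.symm, h01, h02, h12, h10, h20, h21, hms]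
      · rcases eq_or_ne k b2 with hk | hk2
        · subst hk
          by_cases hmt : m = t <;>
            simp [flipBlock_apply, unit, bxor, Prod.ext_iff, Finset.mem_insert, Finset.mem_singleton, hij', hij'.symm, h01, h02, h12, h10, h20, h21, hmt]
        · simp [flipBlock_apply, unit, bxor, Prod.ext_iff, Finset.mem_insert, Finset.mem_singleton, hij', hij'.symm, h01, h02, h12, h10, h20, h21, hk0, hk1, hk2]

  have H := hmgi (flipBlock α b0 (unit i)) {(b0,i),(b0,j),(b1,s),(b2,t)}
  have hm1 : ((b0,i) : Fin n × Fin ℓ) ∉ ({(b0,j),(b1,s),(b2,t)} : Finset (Fin n × Fin ℓ)) := by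
    simp [Prod.ext_iff, hij', h01, h02]
  have hm2 : ((b0,j) : Fin n × Fin ℓ) ∉ ({(b1,s),(b2,t)} : Finset (Fin n × Fin ℓ)) := by
    simp [Prod.ext_iff, h01, h02]
  have hm3 : ((b1,s) : Fin n × Fin ℓ) ∉ ({(b2,t)} : Finset (Fin n × Fin ℓ)) := by
    simp [Prod.ext_iff, h12]
  rw [Finset.sum_insert hm1, Finset.sum_insert hm2, Finset.sum_insert hm3,
    Finset.sum_singleton] at H
  dsimp only at H
  have hf1 : Finset.filter (fun q : Fin n × Fin ℓ => q.1 < b0 ∨ q.1 = b0 ∧ q.2 ≤ i)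
      {(b0,i),(b0,j),(b1,s),(b2,t)} = {(b0,i)} := by
    rw [Finset.filter_insert, if_pos (by simp), Finset.filter_insert,
      if_neg (by simp [hji]), Finset.filter_insert, if_neg (by simp [nl10, h10]),
      Finset.filter_singleton, if_neg (by simp [nl20, h20])]
    simp
  have hf2 : Finset.filter (fun q : Fin n × Fin ℓ => q.1 < b0 ∨ q.1 = b0 ∧ q.2 ≤ j)
      {(b0,i),(b0,j),(b1,s),(b2,t)} = {(b0,i),(b0,j)} := by
    rw [Finset.filter_insert, if_pos (by simp [hij.le]), Finset.filter_insert,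
      if_pos (by simp), Finset.filter_insert, if_neg (by simp [nl10, h10]),
      Finset.filter_singleton, if_neg (by simp [nl20, h20])]
    simp
  have hf3 : Finset.filter (fun q : Fin n × Fin ℓ => q.1 < b1 ∨ q.1 = b1 ∧ q.2 ≤ s)
      {(b0,i),(b0,j),(b1,s),(b2,t)} = {(b0,i),(b0,j),(b1,s)} := by
    rw [Finset.filter_insert, if_pos (by simp [l01]), Finset.filter_insert,
      if_pos (by simp [l01]), Finset.filter_insert, if_pos (by simp),
      Finset.filter_singleton, if_neg (by simp [nl21, h21])]
    simp
  have hf4 : Finset.filter (fun q : Fin n × Fin ℓ => q.1 < b2 ∨ q.1 = b2 ∧ q.2 ≤ t)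
      {(b0,i),(b0,j),(b1,s),(b2,t)} = {(b0,i),(b0,j),(b1,s),(b2,t)} := by
    rw [Finset.filter_insert, if_pos (by simp [l02]), Finset.filter_insert,
      if_pos (by simp [l02]), Finset.filter_insert, if_pos (by simp [l12]),
      Finset.filter_singleton, if_pos (by simp)]
  have hcard2 : #({(b0,i),(b0,j)} : Finset (Fin n × Fin ℓ)) = 2 := by
    rw [Finset.card_insert_of_notMem (by simp [Prod.ext_iff, hij']), Finset.card_singleton]
  have hcard3 : #({(b0,i),(b0,j),(b1,s)} : Finset (Fin n × Fin ℓ)) = 3 := by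
    rw [Finset.card_insert_of_notMem (by simp [Prod.ext_iff, hij', h01]),
      Finset.card_insert_of_notMem (by simp [Prod.ext_iff, h01]), Finset.card_singleton]
  have hcard4 : #({(b0,i),(b0,j),(b1,s),(b2,t)} : Finset (Fin n × Fin ℓ)) = 4 := by
    rw [Finset.card_insert_of_notMem hm1, Finset.card_insert_of_notMem hm2,
      Finset.card_insert_of_notMem hm3, Finset.card_singleton]
  rw [ha1, ha2, ha3, ha4, ha5, ha6, ha7, ha8, hf1, hf2, hf3, hf4, hcard2, hcard3, hcard4,
    Finset.card_singleton] at H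
  linear_combination -H

end Aux

/-- Corollary: for a blockwise symmetric signature satisfying the MGI, the
two column vectors of the matrix of Statement 8 are linearly dependent. -/
theorem stmt9 (n ℓ : ℕ) (hn : 3 ≤ n) (hℓ : 1 ≤ ℓ)
    (Γ : (Fin n → Fin ℓ → Bool) → ℂ)
    (hsym : BlockSym Γ) (hmgi : MGI Γ) :
    ∀ (α : Fin n → Fin ℓ → Bool) (i j s t : Fin ℓ), i < j →
      ¬ LinearIndependent ℂ
        ![![Γ α, Γ (flipBlock α ⟨0, by omega⟩ (bxor (unit i) (unit j)))],
          ![Γ (flipBlock (flipBlock α ⟨1, by omega⟩ (unit s)) ⟨2, by omega⟩ (unit t)),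
            Γ (flipBlock (flipBlock (flipBlock α ⟨0, by omega⟩ (bxor (unit i) (unit j)))
                ⟨1, by omega⟩ (unit s)) ⟨2, by omega⟩ (unit t))]] := by
  intro α i j s t hij
  intro hLI
  set b0 : Fin n := ⟨0, by omega⟩ with hb0
  set b1 : Fin n := ⟨1, by omega⟩ with hb1
  set b2 : Fin n := ⟨2, by omega⟩ with hb2
  have h01 : b0 ≠ b1 := by simp [hb0, hb1, Fin.ext_iff]
  have h02 : b0 ≠ b2 := by simp [hb0, hb2, Fin.ext_iff]
  have h12 : b1 ≠ b2 := by simp [hb1, hb2, Fin.ext_iff]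
  have h21 : b2 ≠ b1 := h12.symm
  have E1 := key hn Γ hmgi α i j s t hij
  have E2 := key hn Γ hmgi (α ∘ Equiv.swap b1 b2) i j t s hij
  have s0 : Equiv.swap b1 b2 b0 = b0 := Equiv.swap_apply_of_ne_of_ne h01 h02
  have s1 : Equiv.swap b1 b2 b1 = b2 := Equiv.swap_apply_left _ _
  have s2 : Equiv.swap b1 b2 b2 = b1 := Equiv.swap_apply_right _ _
  have hswap : ∀ (σ : Equiv.Perm (Fin n)) (β : Fin n → Fin ℓ → Bool), Γ (β ∘ σ) = Γ β :=
    fun σ β => hsym σ β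
  simp only [flipBlock_comp, ← hb0, ← hb1, ← hb2, s0, s1, s2, hswap] at E2
  rw [flipBlock_comm α h21 (unit t) (unit s),
    flipBlock_comm (flipBlock α b0 (bxor (unit i) (unit j))) h21 (unit t) (unit s)] at E2
  have h0 : Γ α *
        Γ (flipBlock (flipBlock (flipBlock α b0 (bxor (unit i) (unit j))) b1 (unit s)) b2
          (unit t))
      - Γ (flipBlock α b0 (bxor (unit i) (unit j))) *
        Γ (flipBlock (flipBlock α b1 (unit s)) b2 (unit t)) = 0 := by
    linear_combination (E1 + E2) / 2
  have hu : IsUnit (!![Γ α, Γ (flipBlock α b0 (bxor (unit i) (unit j)));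
      Γ (flipBlock (flipBlock α b1 (unit s)) b2 (unit t)),
      Γ (flipBlock (flipBlock (flipBlock α b0 (bxor (unit i) (unit j))) b1 (unit s)) b2
        (unit t))]) :=
    Matrix.linearIndependent_rows_iff_isUnit.mp (by exact hLI)
  have hdet := (Matrix.isUnit_iff_isUnit_det _).mp hu
  rw [Matrix.det_fin_two_of] at hdet
  rw [show Γ α *
        Γ (flipBlock (flipBlock (flipBlock α b0 (bxor (unit i) (unit j))) b1 (unit s)) b2
          (unit t))
      - Γ (flipBlock α b0 (bxor (unit i) (unit j))) *
        Γ (flipBlock (flipBlock α b1 (unit s)) b2 (unit t)) = 0 from h0] at hdet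
  exact hdet.ne_zero rfl


end Matchgate
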